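/- Let A be a finite nonempty set with Acc : A → ℝ and two pairs of rank-equivalent functions L1 ~ L2 and E1 ~ E2 on A. Define the Pareto front of hardware h as the set of a ∈ A such that no b ∈ A satisfies L_h(b) ≤ L_h(a), E_h(b) ≤ E_h(a), Acc(b) ≥ Acc(a) with at least one inequality strict. Then the Pareto front with respect to (L1, E1, Acc) equals the Pareto front with respect to (L2, E2, Acc). -/

import Mathlib

/-- `b` strictly dominates `a` w.r.t. latency `L`, energy `E` and accuracy `Acc`. -/
def Dominates {A : Type*} (L E Acc : A → ℝ) (b a : A) : Prop :=
  L b ≤ L a ∧ E b ≤ E a ∧ Acc a ≤ Acc b ∧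
    (L b < L a ∨ E b < E a ∨ Acc a < Acc b)

theorem stmt_2 {A : Type*} [Fintype A] [Nonempty A]
    (Acc L1 L2 E1 E2 : A → ℝ)
    (hL : ∀ a b : A, L1 a ≤ L1 b ↔ L2 a ≤ L2 b)
    (hE : ∀ a b : A, E1 a ≤ E1 b ↔ E2 a ≤ E2 b) :
    {a : A | ¬ ∃ b : A, Dominates L1 E1 Acc b a} =
      {a : A | ¬ ∃ b : A, Dominates L2 E2 Acc b a} := by
  have hLlt : ∀ a b : A, L1 a < L1 b ↔ L2 a < L2 b := by
    intro a b
    simp only [lt_iff_not_ge, hL]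
  have hElt : ∀ a b : A, E1 a < E1 b ↔ E2 a < E2 b := by
    intro a b
    simp only [lt_iff_not_ge, hE]
  ext a
  simp only [Set.mem_setOf_eq, Dominates, hL, hE, hLlt, hElt]
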